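/- If Q is a finite power-associative CC-loop and p is a prime dividing the order |Q|, then Q contains an element of order p; in particular there exists x ∈ Q with x ≠ 1 and x^p = 1. -/
import Mathlib


/-- A loop: a type with multiplication, identity, and two-sided division. -/
class Loop (Q : Type*) extends Mul Q, One Q where
  ld : Q → Q → Q  -- left division: `ld x y = x \ y`
  rd : Q → Q → Q  -- right division: `rd x y = x / y`
  one_mul : ∀ x : Q, 1 * x = x
  mul_one : ∀ x : Q, x * 1 = x
  mul_ld : ∀ x y : Q, x * ld x y = y
  ld_mul : ∀ x y : Q, ld x (x * y) = y
  rd_mul : ∀ x y : Q, rd x y * y = x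
  mul_rd : ∀ x y : Q, rd (x * y) y = x

namespace Loop

variable {Q : Type*} [Loop Q]

/-- A conjugacy closed loop (CC-loop). -/
def IsCC (Q : Type*) [Loop Q] : Prop :=
  (∀ x y z : Q, x * (y * z) = rd (x * y) x * (x * z)) ∧
  (∀ x y z : Q, (z * y) * x = (z * x) * ld x (y * x))

/-- The nucleus `N(Q)`. -/
def nucleus (Q : Type*) [Loop Q] : Set Q :=
  {a | (∀ x y : Q, a * (x * y) = (a * x) * y) ∧
       (∀ x y : Q, x * (a * y) = (x * a) * y) ∧
       (∀ x y : Q, x * (y * a) = (x * y) * a)}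

/-- A subloop: contains 1 and is closed under `·`, `\`, `/`. -/
def IsSubloop (S : Set Q) : Prop :=
  (1 : Q) ∈ S ∧ (∀ a ∈ S, ∀ b ∈ S, a * b ∈ S) ∧
  (∀ a ∈ S, ∀ b ∈ S, ld a b ∈ S) ∧ (∀ a ∈ S, ∀ b ∈ S, rd a b ∈ S)

/-- The subloop generated by a set `S`. -/
def closure (S : Set Q) : Set Q := ⋂₀ {T : Set Q | IsSubloop T ∧ S ⊆ T}

/-- An element is power-associative if the subloop it generates is associative. -/
def IsPA (a : Q) : Prop :=
  ∀ x ∈ closure {a}, ∀ y ∈ closure {a}, ∀ z ∈ closure {a}, x * (y * z) = (x * y) * z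

/-- Powers: `pow a 0 = 1`, `pow a (n+1) = a * pow a n`. -/
def pow (a : Q) : ℕ → Q
  | 0 => 1
  | n + 1 => a * pow a n

/-- A WIP (weak inverse property) element. -/
def IsWIP (c : Q) : Prop := ∀ x : Q, c * ld (x * c) 1 = ld x 1

end Loop

open Loop

namespace CCAux

variable {Q : Type*} [Loop Q]

/-! ### Basic cancellation -/

theorem mul_left_cancel {a b c : Q} (h : a * b = a * c) : b = c := by
  have h2 := congrArg (Loop.ld a) h
  rwa [Loop.ld_mul, Loop.ld_mul] at h2

theorem mul_right_cancel {a b c : Q} (h : b * a = c * a) : b = c := by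
  have h2 := congrArg (fun t => Loop.rd t a) h
  simp only [Loop.mul_rd] at h2
  exact h2

theorem eq_ld {a b c : Q} (h : a * b = c) : b = ld a c := by rw [← h, Loop.ld_mul]

/-! ### Nucleus: basic closure properties -/

theorem one_mem_nucleus : (1 : Q) ∈ nucleus Q :=
  ⟨fun x y => by rw [Loop.one_mul, Loop.one_mul],
   fun x y => by rw [Loop.one_mul, Loop.mul_one],
   fun x y => by rw [Loop.mul_one, Loop.mul_one]⟩

theorem mul_mem_nucleus {a b : Q} (ha : a ∈ nucleus Q) (hb : b ∈ nucleus Q) :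
    a * b ∈ nucleus Q := by
  obtain ⟨a1, a2, a3⟩ := ha
  obtain ⟨b1, b2, b3⟩ := hb
  refine ⟨fun x y => ?_, fun x y => ?_, fun x y => ?_⟩
  · calc (a*b)*(x*y) = a*(b*(x*y)) := (a1 b (x*y)).symm
      _ = a*((b*x)*y) := by rw [b1]
      _ = (a*(b*x))*y := a1 (b*x) y
      _ = ((a*b)*x)*y := by rw [a1 b x]
  · calc x*((a*b)*y) = x*(a*(b*y)) := by rw [a1 b y]
      _ = (x*a)*(b*y) := a2 x (b*y)
      _ = ((x*a)*b)*y := b2 (x*a) y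
      _ = (x*(a*b))*y := by rw [a2 x b]
  · calc x*(y*(a*b)) = x*((y*a)*b) := by rw [a2 y b]
      _ = (x*(y*a))*b := b3 x (y*a)
      _ = ((x*y)*a)*b := by rw [a3 x y]
      _ = (x*y)*(a*b) := (a2 (x*y) b).symm

theorem nuc_inv_mul {a : Q} (ha : a ∈ nucleus Q) : ld a 1 * a = 1 := by
  apply mul_left_cancel (a := a)
  rw [ha.1 (ld a 1) a, Loop.mul_ld, Loop.one_mul, Loop.mul_one]

theorem inv_mem_nucleus {a : Q} (ha : a ∈ nucleus Q) : ld a 1 ∈ nucleus Q := by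
  obtain ⟨a1, a2, a3⟩ := ha
  have hJ : ld a 1 * a = 1 := nuc_inv_mul ⟨a1, a2, a3⟩
  have law1 : ∀ x y : Q, ld a 1 * (x * y) = (ld a 1 * x) * y := by
    intro x y
    apply mul_left_cancel (a := a)
    calc a * (ld a 1 * (x*y)) = (a * ld a 1) * (x*y) := a1 (ld a 1) (x*y)
      _ = x*y := by rw [Loop.mul_ld, Loop.one_mul]
      _ = (1*x)*y := by rw [Loop.one_mul]
      _ = ((a * ld a 1)*x)*y := by rw [Loop.mul_ld]
      _ = (a*(ld a 1 * x))*y := by rw [a1 (ld a 1) x]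
      _ = a*((ld a 1 * x)*y) := (a1 (ld a 1 * x) y).symm
  refine ⟨law1, fun x y => ?_, fun x y => ?_⟩
  · -- x * (Ja * y) = (x * Ja) * y
    have hs : a * ld a y = y := Loop.mul_ld a y
    calc x * (ld a 1 * y) = x * (ld a 1 * (a * ld a y)) := by rw [hs]
      _ = x * ((ld a 1 * a) * ld a y) := by rw [law1 a (ld a y)]
      _ = x * ld a y := by rw [hJ, Loop.one_mul]
      _ = (x*1) * ld a y := by rw [Loop.mul_one]
      _ = (x*(ld a 1 * a)) * ld a y := by rw [hJ]
      _ = ((x*ld a 1) * a) * ld a y := by rw [a3 x (ld a 1)]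
      _ = (x*ld a 1) * (a * ld a y) := (a2 (x * ld a 1) (ld a y)).symm
      _ = (x*ld a 1) * y := by rw [hs]
  · -- x * (y * Ja) = (x * y) * Ja
    have ht : rd y a * a = y := Loop.rd_mul y a
    calc x * (y * ld a 1) = x * ((rd y a * a) * ld a 1) := by rw [ht]
      _ = x * (rd y a * (a * ld a 1)) := by rw [a2 (rd y a) (ld a 1)]
      _ = x * rd y a := by rw [Loop.mul_ld, Loop.mul_one]
      _ = (x * rd y a) * 1 := (Loop.mul_one _).symm
      _ = (x * rd y a) * (a * ld a 1) := by rw [Loop.mul_ld]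
      _ = ((x * rd y a) * a) * ld a 1 := a2 (x * rd y a) (ld a 1)
      _ = (x * (rd y a * a)) * ld a 1 := by rw [a3 x (rd y a)]
      _ = (x * y) * ld a 1 := by rw [ht]

/-! ### CC consequences -/

section CC

variable (hl : ∀ x y z : Q, x * (y * z) = rd (x * y) x * (x * z))
variable (hr : ∀ x y z : Q, (z * y) * x = (z * x) * ld x (y * x))

include hl hr

/-- If `a` satisfies the right-nuclear law, so does its conjugate `b \ (a*b)`. -/
theorem rho_gamma {a : Q} (h : ∀ v w : Q, (v*w)*a = v*(w*a)) (b : Q) :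
    ∀ v w : Q, (v*w)*(ld b (a*b)) = v*(w*(ld b (a*b))) := by
  have plus : ∀ s : Q, (s*a)*b = (s*b)*(ld b (a*b)) := fun s => hr b a s
  have step2 : ∀ v w : Q, rd (v*w) b = rd v b * rd (b*w) b := by
    intro v w
    have h1 := hr b (rd (b*w) b) (rd v b)
    rw [Loop.rd_mul (b*w) b, Loop.ld_mul, Loop.rd_mul v b] at h1
    rw [← h1, Loop.mul_rd]
  have main : ∀ v w : Q, (v*w)*(ld b (a*b)) = v * ld b ((rd (b*w) b * a) * b) := by
    intro v w
    calc (v*w)*(ld b (a*b)) = ((rd (v*w) b)*b)*(ld b (a*b)) := by rw [Loop.rd_mul]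
      _ = ((rd (v*w) b)*a)*b := (plus _).symm
      _ = ((rd v b * rd (b*w) b)*a)*b := by rw [step2]
      _ = ((rd v b) * (rd (b*w) b * a))*b := by rw [h (rd v b) (rd (b*w) b)]
      _ = ((rd v b)*b) * ld b ((rd (b*w) b * a)*b) := hr b (rd (b*w) b * a) (rd v b)
      _ = v * ld b ((rd (b*w) b * a)*b) := by rw [Loop.rd_mul]
  intro v w
  have h1 := main 1 w
  rw [Loop.one_mul, Loop.one_mul] at h1
  rw [main v w, ← h1]

/-- Middle-nuclear implies fully nuclear (needs CC). -/
theorem nucleus_of_mu {a : Q} (h : ∀ v w : Q, v*(a*w) = (v*a)*w) : a ∈ nucleus Q := by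
  have hrho : ∀ v w : Q, (v*w)*a = v*(w*a) := by
    intro u v
    calc (u*v)*a = (u*a)*ld a (v*a) := hr a v u
      _ = u*(a*ld a (v*a)) := (h u (ld a (v*a))).symm
      _ = u*(v*a) := by rw [Loop.mul_ld]
  have hmu : ∀ v w : Q, (v*a)*w = v*(a*w) := fun v w => (h v w).symm
  have hlam : ∀ x z : Q, a*(x*z) = (a*x)*z := by
    intro x z
    calc a*(x*z) = rd (a*x) a * (a*z) := hl a x z
      _ = (rd (a*x) a * a)*z := h (rd (a*x) a) z
      _ = (a*x)*z := by rw [Loop.rd_mul]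
  exact ⟨hlam, fun x y => h x y, fun x y => (hrho x y).symm⟩

/-- Right-nuclear implies fully nuclear (needs CC). -/
theorem nucleus_of_rho {a : Q} (h : ∀ v w : Q, (v*w)*a = v*(w*a)) : a ∈ nucleus Q := by
  apply nucleus_of_mu hl hr
  intro v w
  have hg := rho_gamma hl hr h w
  calc v*(a*w) = v*(w * ld w (a*w)) := by rw [Loop.mul_ld]
    _ = (v*w)*ld w (a*w) := (hg v w).symm
    _ = (v*a)*w := (hr w a v).symm

/-- Conjugation preserves the nucleus. -/
theorem gamma_mem_nucleus {n : Q} (hn : n ∈ nucleus Q) (b : Q) :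
    ld b (n*b) ∈ nucleus Q :=
  nucleus_of_rho hl hr (rho_gamma hl hr (fun v w => (hn.2.2 v w).symm) b)

/-! #### Translation-conjugation calculus -/

theorem eL2 (a c v : Q) : ld a (c*v) = ld a (c*a) * ld a v := by
  have h2 : a * (ld a (c*a) * ld a v) = c * v := by
    rw [hl a (ld a (c*a)) (ld a v), Loop.mul_ld a (c*a), Loop.mul_ld a v, Loop.mul_rd c a]
  apply mul_left_cancel (a := a)
  rw [Loop.mul_ld a (c*v)]
  exact h2.symm

theorem eR2 (a c v : Q) : rd (v*c) a = rd v a * rd (a*c) a := by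
  have h2 : (rd v a * rd (a*c) a) * a = v * c := by
    rw [hr a (rd (a*c) a) (rd v a), Loop.rd_mul (a*c) a, Loop.ld_mul a c, Loop.rd_mul v a]
  apply mul_right_cancel (a := a)
  rw [Loop.rd_mul (v*c) a]
  exact h2.symm

theorem cjpair (z a b v : Q) :
    ld z (rd (z*v) b * a) = rd v (ld z b) * ld z a := by
  have h1 : z * v = rd (z * rd v (ld z b)) z * b := by
    conv_lhs => rw [(Loop.rd_mul v (ld z b)).symm]
    rw [hl z (rd v (ld z b)) (ld z b), Loop.mul_ld z b]
  have h2 : rd (z*v) b = rd (z * rd v (ld z b)) z := by rw [h1, Loop.mul_rd]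
  apply mul_left_cancel (a := z)
  rw [Loop.mul_ld, h2, hl z (rd v (ld z b)) (ld z a), Loop.mul_ld z a]

theorem Ept (x y v : Q) :
    x * (y * ld (x*y) v) = rd (rd v y) x * (x*y) := by
  have h1 := hr y (ld x (rd v y)) x
  rw [Loop.mul_ld x (rd v y), Loop.rd_mul v y] at h1
  have step1 : ld (x*y) v = ld y (ld x (rd v y) * y) := (eq_ld h1.symm).symm
  rw [step1, Loop.mul_ld y _, hl x (ld x (rd v y)) y, Loop.mul_ld x (rd v y)]

theorem gRform (z x y v : Q) :
    ld z (x * (y * ld (x*y) (z*v))) =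
      rd (rd v (ld z y) * ld z 1) (ld z x) * ld z (x*y) := by
  rw [Ept hl hr x y (z*v)]
  have h1 : ld z (rd (z*v) y * 1) = rd v (ld z y) * ld z 1 := cjpair hl hr z 1 y v
  rw [Loop.mul_one] at h1
  have h2 : rd (z*v) y = z * (rd v (ld z y) * ld z 1) := by rw [← h1, Loop.mul_ld]
  rw [h2]
  exact cjpair hl hr z (x*y) x (rd v (ld z y) * ld z 1)

/-- The key lemma: a surjection intertwining left translations with left translations
and right translations with right translations has nuclear value at 1. -/
theorem nucleus_of_biconj (g : Q → Q) (hs : Function.Surjective g)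
    (hL : ∀ c : Q, ∃ u : Q, ∀ v : Q, g (c*v) = u * g v)
    (hR : ∀ c : Q, ∃ u : Q, ∀ v : Q, g (v*c) = g v * u) :
    g 1 ∈ nucleus Q := by
  have hL' : ∀ c v : Q, g (c*v) = rd (g c) (g 1) * g v := by
    intro c v
    obtain ⟨u, hu⟩ := hL c
    have h1 := hu 1
    rw [Loop.mul_one] at h1
    have h2 : u = rd (g c) (g 1) := by rw [h1, Loop.mul_rd]
    rw [hu v, h2]
  have hR' : ∀ c v : Q, g (v*c) = g v * ld (g 1) (g c) := by
    intro c v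
    obtain ⟨u, hu⟩ := hR c
    have h1 := hu 1
    rw [Loop.one_mul] at h1
    have h2 : u = ld (g 1) (g c) := by rw [h1, Loop.ld_mul]
    rw [hu v, h2]
  have key : ∀ p q : Q, rd p (g 1) * q = p * ld (g 1) q := by
    intro p q
    obtain ⟨s, rfl⟩ := hs p
    obtain ⟨t, rfl⟩ := hs q
    rw [← hL' s t, hR' t s]
  apply nucleus_of_mu hl hr
  intro m w
  have h1 := key (m * g 1) (g 1 * w)
  rwa [Loop.mul_rd, Loop.ld_mul] at h1

/-- Associators lie in the nucleus. -/
theorem assoc_mod_nucleus (x y w : Q) :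
    ∃ n ∈ nucleus Q, x * (y * w) = ((x*y)*w) * n := by
  set z := (x*y)*w with hz
  set g : Q → Q := fun v => ld z (x * (y * ld (x*y) (z*v))) with hg
  have hs : Function.Surjective g := by
    intro t
    refine ⟨ld z ((x*y) * ld y (ld x (z*t))), ?_⟩
    simp only [hg]
    rw [Loop.mul_ld, Loop.ld_mul, Loop.mul_ld, Loop.mul_ld, Loop.ld_mul]
  have hL : ∀ c : Q, ∃ u : Q, ∀ v : Q, g (c*v) = u * g v := by
    intro c
    obtain ⟨u1, e1⟩ : ∃ u, ∀ v, z*(c*v) = u*(z*v) := ⟨rd (z*c) z, fun v => hl z c v⟩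
    obtain ⟨u2, e2⟩ : ∃ u, ∀ s, ld (x*y) (u1*s) = u * ld (x*y) s :=
      ⟨ld (x*y) (u1*(x*y)), fun s => eL2 hl hr (x*y) u1 s⟩
    obtain ⟨u3, e3⟩ : ∃ u, ∀ s, y*(u2*s) = u*(y*s) := ⟨rd (y*u2) y, fun s => hl y u2 s⟩
    obtain ⟨u4, e4⟩ : ∃ u, ∀ s, x*(u3*s) = u*(x*s) := ⟨rd (x*u3) x, fun s => hl x u3 s⟩
    obtain ⟨u5, e5⟩ : ∃ u, ∀ s, ld z (u4*s) = u * ld z s := ⟨ld z (u4*z), fun s => eL2 hl hr z u4 s⟩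
    refine ⟨u5, fun v => ?_⟩
    simp only [hg]
    rw [e1 v, e2, e3, e4, e5]
  have hR : ∀ c : Q, ∃ u : Q, ∀ v : Q, g (v*c) = g v * u := by
    intro c
    obtain ⟨u1, e1⟩ : ∃ u, ∀ v, rd (v*c) (ld z y) = rd v (ld z y) * u :=
      ⟨rd ((ld z y)*c) (ld z y), fun v => eR2 hl hr (ld z y) c v⟩
    obtain ⟨u2, e2⟩ : ∃ u, ∀ s : Q, (s*u1)*(ld z 1) = (s*(ld z 1))*u :=
      ⟨ld (ld z 1) (u1*(ld z 1)), fun s => hr (ld z 1) u1 s⟩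
    obtain ⟨u3, e3⟩ : ∃ u, ∀ s : Q, rd (s*u2) (ld z x) = rd s (ld z x) * u :=
      ⟨rd ((ld z x)*u2) (ld z x), fun s => eR2 hl hr (ld z x) u2 s⟩
    obtain ⟨u4, e4⟩ : ∃ u, ∀ s : Q, (s*u3)*(ld z (x*y)) = (s*(ld z (x*y)))*u :=
      ⟨ld (ld z (x*y)) (u3*(ld z (x*y))), fun s => hr (ld z (x*y)) u3 s⟩
    refine ⟨u4, fun v => ?_⟩
    have hv1 : g (v*c) = rd (rd (v*c) (ld z y) * ld z 1) (ld z x) * ld z (x*y) := by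
      simp only [hg]; exact gRform hl hr z x y (v*c)
    have hv2 : g v = rd (rd v (ld z y) * ld z 1) (ld z x) * ld z (x*y) := by
      simp only [hg]; exact gRform hl hr z x y v
    rw [hv1, hv2, e1, e2, e3, e4]
  have hn : g 1 ∈ nucleus Q := nucleus_of_biconj hl hr g hs hL hR
  refine ⟨g 1, hn, ?_⟩
  have h1 : g 1 = ld z (x*(y*w)) := by
    simp only [hg]
    rw [Loop.mul_one, show ld (x*y) z = w from by rw [hz, Loop.ld_mul]]
  rw [h1, Loop.mul_ld]

end CC

/-! ### Closure and power-associativity -/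

theorem mem_closure_self (a : Q) : a ∈ closure {a} :=
  Set.mem_sInter.mpr fun _ hT => hT.2 rfl

theorem one_mem_closure (S : Set Q) : (1 : Q) ∈ closure S :=
  Set.mem_sInter.mpr fun _ hT => hT.1.1

theorem mul_mem_closure {S : Set Q} {a b : Q} (ha : a ∈ closure S) (hb : b ∈ closure S) :
    a * b ∈ closure S :=
  Set.mem_sInter.mpr fun T hT =>
    hT.1.2.1 a (Set.mem_sInter.mp ha T hT) b (Set.mem_sInter.mp hb T hT)

theorem ld_mem_closure {S : Set Q} {a b : Q} (ha : a ∈ closure S) (hb : b ∈ closure S) :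
    ld a b ∈ closure S :=
  Set.mem_sInter.mpr fun T hT =>
    hT.1.2.2.1 a (Set.mem_sInter.mp ha T hT) b (Set.mem_sInter.mp hb T hT)

theorem rd_mem_closure {S : Set Q} {a b : Q} (ha : a ∈ closure S) (hb : b ∈ closure S) :
    rd a b ∈ closure S :=
  Set.mem_sInter.mpr fun T hT =>
    hT.1.2.2.2 a (Set.mem_sInter.mp ha T hT) b (Set.mem_sInter.mp hb T hT)

theorem pa_inv_mul (hpa : ∀ a : Q, IsPA a) (a : Q) : ld a 1 * a = 1 := by
  have h1 : rd 1 a ∈ closure {a} := rd_mem_closure (one_mem_closure _) (mem_closure_self a)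
  have h2 : a ∈ closure {a} := mem_closure_self a
  have h3 : ld a 1 ∈ closure {a} := ld_mem_closure h2 (one_mem_closure _)
  have h4 := hpa a (rd 1 a) h1 a h2 (ld a 1) h3
  rw [Loop.mul_ld, Loop.mul_one, Loop.rd_mul, Loop.one_mul] at h4
  rw [← h4, Loop.rd_mul]

theorem pow_mem_closure (a : Q) : ∀ k : ℕ, Loop.pow a k ∈ closure {a}
  | 0 => one_mem_closure _
  | k+1 => mul_mem_closure (mem_closure_self a) (pow_mem_closure a k)

theorem pow_add (hpa : ∀ a : Q, IsPA a) (a : Q) (m n : ℕ) :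
    Loop.pow a (m+n) = Loop.pow a m * Loop.pow a n := by
  induction m with
  | zero =>
      rw [Nat.zero_add]
      show Loop.pow a n = Loop.pow a 0 * Loop.pow a n
      show Loop.pow a n = 1 * Loop.pow a n
      rw [Loop.one_mul]
  | succ m ih =>
      rw [show m + 1 + n = (m + n) + 1 by omega]
      show a * Loop.pow a (m+n) = (a * Loop.pow a m) * Loop.pow a n
      rw [ih, hpa a a (mem_closure_self a) _ (pow_mem_closure a m) _ (pow_mem_closure a n)]

theorem pow_pow (hpa : ∀ a : Q, IsPA a) (a : Q) (m k : ℕ) :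
    Loop.pow (Loop.pow a m) k = Loop.pow a (m*k) := by
  induction k with
  | zero => rw [Nat.mul_zero]; rfl
  | succ k ih =>
      show Loop.pow a m * Loop.pow (Loop.pow a m) k = Loop.pow a (m*(k+1))
      rw [ih, ← pow_add hpa, show m + m*k = m*(k+1) by ring]

theorem exists_pow_eq_one [Finite Q] (hpa : ∀ a : Q, IsPA a) (a : Q) :
    ∃ k : ℕ, 0 < k ∧ Loop.pow a k = 1 := by
  have key : ∀ i j : ℕ, i < j → Loop.pow a i = Loop.pow a j → Loop.pow a (j-i) = 1 := by
    intro i j hij he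
    apply mul_left_cancel (a := Loop.pow a i)
    rw [← pow_add hpa a i (j-i), show i + (j-i) = j by omega, ← he, Loop.mul_one]
  obtain ⟨i, j, hne, he⟩ := Finite.exists_ne_map_eq_of_infinite (Loop.pow a)
  rcases Nat.lt_or_ge i j with h | h
  · exact ⟨j - i, by omega, key i j h he⟩
  · have h2 : j < i := by omega
    exact ⟨i - j, by omega, key j i h2 he.symm⟩

/-! ### The coset setoid and counting -/

def nucSetoid (Q : Type*) [Loop Q] : Setoid Q where
  r x y := ∃ n ∈ nucleus Q, y = x * n
  iseqv := by
    constructor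
    · exact fun x => ⟨1, one_mem_nucleus, (Loop.mul_one x).symm⟩
    · rintro x y ⟨n, hn, rfl⟩
      refine ⟨ld n 1, inv_mem_nucleus hn, ?_⟩
      rw [← hn.2.1 x (ld n 1), Loop.mul_ld, Loop.mul_one]
    · rintro x y z ⟨n, hn, rfl⟩ ⟨m, hm, rfl⟩
      exact ⟨n*m, mul_mem_nucleus hn hm, (hn.2.1 x m).symm⟩

noncomputable def countEquiv (Q : Type*) [Loop Q] :
    Q ≃ Quotient (nucSetoid Q) × {x : Q // x ∈ nucleus Q} where
  toFun x := (Quotient.mk (nucSetoid Q) x,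
    ⟨ld (Quotient.mk (nucSetoid Q) x).out x, by
      set o := (Quotient.mk (nucSetoid Q) x).out with ho
      obtain ⟨n, hn, he⟩ := Quotient.exact (Quotient.out_eq (Quotient.mk (nucSetoid Q) x))
      rw [show x = o * n from he, Loop.ld_mul]; exact hn⟩)
  invFun p := p.1.out * (p.2 : Q)
  left_inv x := Loop.mul_ld _ x
  right_inv := by
    rintro ⟨q, n, hn⟩
    have h1 : Quotient.mk (nucSetoid Q) (q.out * n) = q :=
      ((Quotient.sound ⟨n, hn, rfl⟩ : Quotient.mk (nucSetoid Q) q.out = _).symm).trans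
        (Quotient.out_eq q)
    simp only [Prod.mk.injEq, h1, Subtype.mk.injEq]
    exact ⟨trivial, Loop.ld_mul _ n⟩

/-! ### The nucleus as a group -/

def nucGroup (Q : Type*) [Loop Q] : Group {x : Q // x ∈ nucleus Q} where
  mul a b := ⟨a.1 * b.1, mul_mem_nucleus a.2 b.2⟩
  one := ⟨1, one_mem_nucleus⟩
  inv a := ⟨ld a.1 1, inv_mem_nucleus a.2⟩
  mul_assoc a b c := Subtype.ext (a.2.1 b.1 c.1).symm
  one_mul a := Subtype.ext (Loop.one_mul a.1)
  mul_one a := Subtype.ext (Loop.mul_one a.1)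
  inv_mul_cancel a := Subtype.ext (nuc_inv_mul a.2)

/-! ### The quotient as a group -/

section Quot

variable (hl : ∀ x y z : Q, x * (y * z) = rd (x * y) x * (x * z))
variable (hr : ∀ x y z : Q, (z * y) * x = (z * x) * ld x (y * x))
include hl hr

theorem mul_respects : ∀ a b a' b' : Q, (nucSetoid Q).r a a' → (nucSetoid Q).r b b' →
    (nucSetoid Q).r (a * b) (a' * b') := by
  rintro a b _ _ ⟨n, hn, rfl⟩ ⟨m, hm, rfl⟩
  have hc : ld b (n*b) ∈ nucleus Q := gamma_mem_nucleus hl hr hn b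
  refine ⟨ld b (n*b) * m, mul_mem_nucleus hc hm, ?_⟩
  calc (a*n)*(b*m) = ((a*n)*b)*m := hm.2.2 (a*n) b
    _ = (a*(n*b))*m := by rw [← hn.2.1 a b]
    _ = (a*(b * ld b (n*b)))*m := by rw [Loop.mul_ld]
    _ = ((a*b) * ld b (n*b))*m := by rw [hc.2.2 a b]
    _ = (a*b) * (ld b (n*b) * m) := (hm.2.2 (a*b) (ld b (n*b))).symm

theorem inv_respects : ∀ a a' : Q, (nucSetoid Q).r a a' →
    (nucSetoid Q).r (ld a 1) (ld a' 1) := by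
  rintro a _ ⟨n, hn, rfl⟩
  refine ⟨ld (ld a 1) (ld n 1 * ld a 1),
    gamma_mem_nucleus hl hr (inv_mem_nucleus hn) (ld a 1), ?_⟩
  have hJ : (a*n) * (ld n 1 * ld a 1) = 1 := by
    calc (a*n) * (ld n 1 * ld a 1) = a*(n*(ld n 1 * ld a 1)) := (hn.2.1 a _).symm
      _ = a*((n*ld n 1) * ld a 1) := by rw [hn.1 (ld n 1) (ld a 1)]
      _ = 1 := by rw [Loop.mul_ld, Loop.one_mul, Loop.mul_ld]
  rw [← eq_ld hJ]
  exact (Loop.mul_ld (ld a 1) (ld n 1 * ld a 1)).symm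

noncomputable def quotGroup (hpa : ∀ a : Q, IsPA a) : Group (Quotient (nucSetoid Q)) where
  mul := Quotient.lift₂ (fun a b => Quotient.mk (nucSetoid Q) (a * b))
    (fun a b a' b' ha hb => Quotient.sound (mul_respects hl hr a b a' b' ha hb))
  one := Quotient.mk (nucSetoid Q) 1
  inv := Quotient.lift (fun a => Quotient.mk (nucSetoid Q) (ld a 1))
    (fun a a' ha => Quotient.sound (inv_respects hl hr a a' ha))
  mul_assoc := by
    intro qa qb qc
    induction qa using Quotient.ind
    induction qb using Quotient.ind
    induction qc using Quotient.ind
    rename_i a b c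
    obtain ⟨n, hn, he⟩ := assoc_mod_nucleus hl hr a b c
    exact Quotient.sound ⟨n, hn, he⟩
  one_mul := by
    intro qa
    induction qa using Quotient.ind
    rename_i a
    show Quotient.mk (nucSetoid Q) (1 * a) = Quotient.mk (nucSetoid Q) a
    rw [Loop.one_mul]
  mul_one := by
    intro qa
    induction qa using Quotient.ind
    rename_i a
    show Quotient.mk (nucSetoid Q) (a * 1) = Quotient.mk (nucSetoid Q) a
    rw [Loop.mul_one]
  inv_mul_cancel := by
    intro qa
    induction qa using Quotient.ind
    rename_i a
    show Quotient.mk (nucSetoid Q) (ld a 1 * a) = Quotient.mk (nucSetoid Q) 1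
    rw [pa_inv_mul hpa a]

end Quot

end CCAux

open CCAux

/-- A finite power-associative CC-loop whose order is divisible by a prime `p`
contains an element of order `p`. -/
theorem stmt_3 {Q : Type*} [Loop Q] [Finite Q] (hcc : IsCC Q)
    (hpa : ∀ a : Q, IsPA a) (p : ℕ) (hp : p.Prime) (hdvd : p ∣ Nat.card Q) :
    ∃ x : Q, x ≠ 1 ∧ pow x p = 1 := by
  classical
  obtain ⟨hl, hr⟩ := hcc
  haveI := Fact.mk hp
  have hcard : Nat.card Q =
      Nat.card (Quotient (nucSetoid Q)) * Nat.card {x : Q // x ∈ nucleus Q} := by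
    rw [Nat.card_congr (countEquiv Q), Nat.card_prod]
  rw [hcard] at hdvd
  rcases (Nat.Prime.dvd_mul hp).mp hdvd with hq | hn
  · -- p divides the order of the quotient group
    letI : Group (Quotient (nucSetoid Q)) := quotGroup hl hr hpa
    haveI : Fintype (Quotient (nucSetoid Q)) := Fintype.ofFinite _
    have hq' : p ∣ Fintype.card (Quotient (nucSetoid Q)) := by
      rwa [← Nat.card_eq_fintype_card]
    obtain ⟨t, ht⟩ := exists_prime_orderOf_dvd_card p hq'
    obtain ⟨x, rfl⟩ := Quotient.exists_rep t
    have hmk : ∀ k : ℕ,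
        Quotient.mk (nucSetoid Q) (Loop.pow x k) = (Quotient.mk (nucSetoid Q) x)^k := by
      intro k
      induction k with
      | zero => rw [pow_zero]; rfl
      | succ k ih =>
          rw [pow_succ', ← ih]
          rfl
    have hex : ∃ k : ℕ, 0 < k ∧ Loop.pow x k = 1 := exists_pow_eq_one hpa x
    have hnpos : 0 < Nat.find hex := (Nat.find_spec hex).1
    have hn1 : Loop.pow x (Nat.find hex) = 1 := (Nat.find_spec hex).2
    have hdvd2 : p ∣ Nat.find hex := by
      have h2 : (Quotient.mk (nucSetoid Q) x) ^ (Nat.find hex) = 1 := by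
        rw [← hmk, hn1]; rfl
      exact ht ▸ orderOf_dvd_of_pow_eq_one h2
    refine ⟨Loop.pow x (Nat.find hex / p), ?_, ?_⟩
    · intro hcon
      have hlt : Nat.find hex / p < Nat.find hex := Nat.div_lt_self hnpos hp.one_lt
      have hpos : 0 < Nat.find hex / p :=
        Nat.div_pos (Nat.le_of_dvd hnpos hdvd2) hp.pos
      exact (Nat.find_min hex hlt) ⟨hpos, hcon⟩
    · rw [pow_pow hpa, Nat.div_mul_cancel hdvd2, hn1]
  · -- p divides the order of the nucleus
    letI : Group {x : Q // x ∈ nucleus Q} := nucGroup Q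
    haveI : Fintype {x : Q // x ∈ nucleus Q} := Fintype.ofFinite _
    have hn' : p ∣ Fintype.card {x : Q // x ∈ nucleus Q} := by
      rwa [← Nat.card_eq_fintype_card]
    obtain ⟨a, ha⟩ := exists_prime_orderOf_dvd_card p hn'
    have hcoe : ∀ k : ℕ, Loop.pow (a : Q) k = ((a ^ k : {x : Q // x ∈ nucleus Q}) : Q) := by
      intro k
      induction k with
      | zero => rw [pow_zero]; rfl
      | succ k ih =>
          rw [pow_succ']
          show (a : Q) * Loop.pow (a : Q) k = _
          rw [ih]
          rfl
    refine ⟨(a : Q), ?_, ?_⟩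
    · intro h
      have h2 : a = (1 : {x : Q // x ∈ nucleus Q}) := Subtype.ext h
      rw [h2, orderOf_one] at ha
      exact hp.one_lt.ne' ha.symm
    · rw [hcoe p, ← ha, pow_orderOf_eq_one]
      rfl
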